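/- In the Empty graph (i.i.d. sentiments) model with external influence h ∈ ℝ, if the supermajority threshold satisfies S ≠ tanh(h), then the detection error probability decays exponentially: limsup_{n→∞} (1/n) log P_e^{(n)} < 0 (in particular lim_{n→∞} P_e^{(n)} = 0). -/

import Mathlib

open MeasureTheory Filter Real

set_option maxHeartbeats 1000000

lemma chernoffAux {α : Type*} [Fintype α] (w v : α → ℝ) (hw : ∀ a, 0 ≤ w a)
    (n : ℕ) (a : ℝ) (B : Finset (Fin n → α)) (hB : ∀ s ∈ B, a * n ≤ ∑ i, v (s i)) :
    ∑ s ∈ B, ∏ i, w (s i) ≤ (Real.exp (-a) * ∑ x, Real.exp (v x) * w x) ^ n := by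
  have h1 : ∑ s ∈ B, ∏ i, w (s i)
      ≤ ∑ s ∈ B, ∏ i, Real.exp (v (s i) - a) * w (s i) := by
    apply Finset.sum_le_sum
    intro s hs
    have : ∏ i, Real.exp (v (s i) - a) * w (s i)
        = Real.exp (∑ i, v (s i) - a * n) * ∏ i, w (s i) := by
      rw [Finset.prod_mul_distrib, ← Real.exp_sum]
      congr 2
      rw [Finset.sum_sub_distrib]
      simp [mul_comm]
    rw [this]
    have h2 : (1:ℝ) ≤ Real.exp (∑ i, v (s i) - a * n) :=
      Real.one_le_exp (by linarith [hB s hs])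
    have h3 : 0 ≤ ∏ i, w (s i) := Finset.prod_nonneg fun i _ => hw _
    nlinarith
  have h4 : ∑ s ∈ B, ∏ i, Real.exp (v (s i) - a) * w (s i)
      ≤ ∑ s : Fin n → α, ∏ i, Real.exp (v (s i) - a) * w (s i) :=
    Finset.sum_le_sum_of_subset_of_nonneg (Finset.subset_univ B)
      (fun s _ _ => Finset.prod_nonneg fun i _ => mul_nonneg (Real.exp_pos _).le (hw _))
  have h5 : (∑ x, Real.exp (v x - a) * w x) ^ n
      = ∑ s : Fin n → α, ∏ i, Real.exp (v (s i) - a) * w (s i) :=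
    Fintype.sum_pow _ n
  calc ∑ s ∈ B, ∏ i, w (s i) ≤ _ := le_trans h1 h4
    _ = (∑ x, Real.exp (v x - a) * w x) ^ n := h5.symm
    _ = (Real.exp (-a) * ∑ x, Real.exp (v x) * w x) ^ n := by
        congr 1
        rw [Finset.mul_sum]
        congr 1; funext x
        rw [← mul_assoc, ← Real.exp_add]
        ring_nf

lemma existsTilt (ρ σ : ℝ) (hσ : σ < 2*ρ - 1) :
    ∃ τ : ℝ, 0 < τ ∧ Real.exp (τ*σ) * (ρ * Real.exp (-τ) + (1-ρ) * Real.exp τ) < 1 := by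
  set f : ℝ → ℝ := fun τ => Real.exp (τ*σ) * (ρ * Real.exp (-τ) + (1-ρ) * Real.exp τ) with hf
  have hd : HasDerivAt f (σ + (1 - 2*ρ)) 0 := by
    have h1 : HasDerivAt (fun τ : ℝ => Real.exp (τ*σ)) σ 0 := by
      simpa using ((hasDerivAt_id (0:ℝ)).mul_const σ).exp
    have h2 : HasDerivAt (fun τ : ℝ => ρ * Real.exp (-τ) + (1-ρ) * Real.exp τ) (1 - 2*ρ) 0 := by
      have ha : HasDerivAt (fun τ : ℝ => Real.exp (-τ)) (-1) 0 := by
        simpa using (hasDerivAt_neg (0:ℝ)).exp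
      have hb := ((ha.const_mul ρ).add ((Real.hasDerivAt_exp 0).const_mul (1-ρ)))
      refine hb.congr_deriv ?_
      rw [Real.exp_zero]; ring
    have := h1.mul h2
    refine this.congr_deriv ?_
    rw [neg_zero, zero_mul, Real.exp_zero]; ring
  have hf0 : f 0 = 1 := by simp [hf]
  have hs := hasDerivAt_iff_tendsto_slope.mp hd
  have hlt : σ + (1 - 2*ρ) < 0 := by linarith
  have hs' : Tendsto (slope f 0) (nhdsWithin 0 (Set.Ioi 0)) (nhds (σ + (1 - 2*ρ))) :=
    hs.mono_left (nhdsWithin_mono 0 (fun x hx => Set.mem_compl_singleton_iff.mpr (ne_of_gt hx)))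
  have hev : ∀ᶠ τ in nhdsWithin 0 (Set.Ioi 0), slope f 0 τ < 0 :=
    hs'.eventually_lt_const hlt
  obtain ⟨τ, hsl, hτ⟩ := (hev.and self_mem_nhdsWithin).exists
  refine ⟨τ, hτ, ?_⟩
  show f τ < 1
  have heq : slope f 0 τ = (f τ - 1) / τ := by
    rw [slope_def_field, hf0]; ring_nf
  rw [heq] at hsl
  rcases (div_neg_iff).mp hsl with ⟨h1, _⟩ | ⟨_, h2⟩
  · linarith
  · linarith

def pmErr (b : Bool) : ℝ := if b then 1 else -1

noncomputable def wErr (p h : ℝ) (a : Bool × Bool) : ℝ :=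
  (Real.exp (h * pmErr a.1) / (Real.exp h + Real.exp (-h))) *
    (if pmErr a.2 = pmErr a.1 then 1 - p else p)

lemma pmErr_val (b : Bool) : pmErr b = 1 ∨ pmErr b = -1 := by
  cases b <;> simp [pmErr]

lemma wErr_nonneg {p : ℝ} (h : ℝ) (hp0 : 0 < p) (hp1 : p < 1/2) (a : Bool × Bool) :
    0 ≤ wErr p h a := by
  unfold wErr
  have h1 : 0 ≤ Real.exp (h * pmErr a.1) / (Real.exp h + Real.exp (-h)) := by positivity
  have h2 : (0:ℝ) ≤ if pmErr a.2 = pmErr a.1 then 1 - p else p := by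
    split <;> linarith
  exact mul_nonneg h1 h2

lemma event_bound {Ω : Type*} [MeasurableSpace Ω] (P : Measure Ω) [IsProbabilityMeasure P]
    (p h : ℝ)
    (X Y : (n : ℕ) → Ω → Fin n → ℝ)
    (hXval : ∀ n ω i, X n ω i = 1 ∨ X n ω i = -1)
    (hYval : ∀ n ω i, Y n ω i = 1 ∨ Y n ω i = -1)
    (hXpmf : ∀ n (x : Fin n → ℝ), (∀ i, x i = 1 ∨ x i = -1) →
      (P {ω | X n ω = x}).toReal
        = ∏ i, Real.exp (h * x i) / (Real.exp h + Real.exp (-h)))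
    (hjoint : ∀ n (x y : Fin n → ℝ), (∀ i, x i = 1 ∨ x i = -1) →
      (∀ i, y i = 1 ∨ y i = -1) →
      (P {ω | X n ω = x ∧ Y n ω = y}).toReal
        = (P {ω | X n ω = x}).toReal * ∏ i, (if y i = x i then 1 - p else p))
    (n : ℕ) (Q : (Fin n → ℝ) → (Fin n → ℝ) → Prop)
    [DecidablePred fun s : Fin n → Bool × Bool =>
      Q (fun i => pmErr (s i).1) (fun i => pmErr (s i).2)] :
    P {ω | Q (X n ω) (Y n ω)}
      ≤ ENNReal.ofReal (∑ s ∈ Finset.univ.filter (fun s : Fin n → Bool × Bool =>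
          Q (fun i => pmErr (s i).1) (fun i => pmErr (s i).2)), ∏ i, wErr p h (s i)) := by
  set F := Finset.univ.filter (fun s : Fin n → Bool × Bool =>
      Q (fun i => pmErr (s i).1) (fun i => pmErr (s i).2)) with hF
  have hcover : {ω | Q (X n ω) (Y n ω)}
      ⊆ ⋃ s ∈ F, {ω | X n ω = (fun i => pmErr (s i).1) ∧ Y n ω = (fun i => pmErr (s i).2)} := by
    intro ω hω
    set s : Fin n → Bool × Bool := fun i => (decide (X n ω i = 1), decide (Y n ω i = 1)) with hs
    have hx : X n ω = fun i => pmErr (s i).1 := by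
      funext i
      rcases hXval n ω i with hv | hv <;> simp [hs, pmErr, hv] <;> norm_num
    have hy : Y n ω = fun i => pmErr (s i).2 := by
      funext i
      rcases hYval n ω i with hv | hv <;> simp [hs, pmErr, hv] <;> norm_num
    refine Set.mem_biUnion (Finset.mem_filter.mpr ⟨Finset.mem_univ s, ?_⟩) ⟨hx, hy⟩
    rw [← hx, ← hy]
    exact hω
  have hcell : ∀ s : Fin n → Bool × Bool,
      (P {ω | X n ω = (fun i => pmErr (s i).1) ∧ Y n ω = (fun i => pmErr (s i).2)}).toReal
        = ∏ i, wErr p h (s i) := by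
    intro s
    have h1 := hjoint n (fun i => pmErr (s i).1) (fun i => pmErr (s i).2)
      (fun i => pmErr_val _) (fun i => pmErr_val _)
    have h2 := hXpmf n (fun i => pmErr (s i).1) (fun i => pmErr_val _)
    rw [h1, h2, ← Finset.prod_mul_distrib]
    rfl
  calc P {ω | Q (X n ω) (Y n ω)}
      ≤ P (⋃ s ∈ F, {ω | X n ω = (fun i => pmErr (s i).1)
            ∧ Y n ω = (fun i => pmErr (s i).2)}) := measure_mono hcover
    _ ≤ ∑ s ∈ F, P {ω | X n ω = (fun i => pmErr (s i).1)
            ∧ Y n ω = (fun i => pmErr (s i).2)} := measure_biUnion_finset_le F _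
    _ = ∑ s ∈ F, ENNReal.ofReal ((P {ω | X n ω = (fun i => pmErr (s i).1)
            ∧ Y n ω = (fun i => pmErr (s i).2)}).toReal) := by
        refine Finset.sum_congr rfl fun s _ => ?_
        rw [ENNReal.ofReal_toReal (measure_ne_top P _)]
    _ = ENNReal.ofReal (∑ s ∈ F, (P {ω | X n ω = (fun i => pmErr (s i).1)
            ∧ Y n ω = (fun i => pmErr (s i).2)}).toReal) := by
        rw [ENNReal.ofReal_sum_of_nonneg]
        intro s _
        exact ENNReal.toReal_nonneg
    _ = ENNReal.ofReal (∑ s ∈ F, ∏ i, wErr p h (s i)) := by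
        congr 1
        exact Finset.sum_congr rfl fun s _ => hcell s

lemma sumX (p h τ : ℝ) :
    ∑ x : Bool × Bool, Real.exp (τ * pmErr x.1) * wErr p h x
      = (Real.exp h / (Real.exp h + Real.exp (-h))) * Real.exp τ
        + (Real.exp (-h) / (Real.exp h + Real.exp (-h))) * Real.exp (-τ) := by
  rw [Fintype.sum_prod_type]
  simp [Fintype.sum_bool, wErr, pmErr]
  norm_num
  ring

lemma sumY (p h τ : ℝ) :
    ∑ x : Bool × Bool, Real.exp (τ * pmErr x.2) * wErr p h x
      = ((Real.exp h / (Real.exp h + Real.exp (-h))) * (1 - p)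
          + (Real.exp (-h) / (Real.exp h + Real.exp (-h))) * p) * Real.exp τ
        + ((Real.exp h / (Real.exp h + Real.exp (-h))) * p
          + (Real.exp (-h) / (Real.exp h + Real.exp (-h))) * (1 - p)) * Real.exp (-τ) := by
  rw [Fintype.sum_prod_type]
  simp [Fintype.sum_bool, wErr, pmErr]
  norm_num
  ring

section helper
variable {Ω : Type*} [MeasurableSpace Ω] (P : Measure Ω) [IsProbabilityMeasure P]
    (p S h : ℝ)
    (X Y : (n : ℕ) → Ω → Fin n → ℝ)

lemma prob_bound (hp0 : 0 < p) (hp1 : p < 1/2)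
    (hXval : ∀ n ω i, X n ω i = 1 ∨ X n ω i = -1)
    (hYval : ∀ n ω i, Y n ω i = 1 ∨ Y n ω i = -1)
    (hXpmf : ∀ n (x : Fin n → ℝ), (∀ i, x i = 1 ∨ x i = -1) →
      (P {ω | X n ω = x}).toReal
        = ∏ i, Real.exp (h * x i) / (Real.exp h + Real.exp (-h)))
    (hjoint : ∀ n (x y : Fin n → ℝ), (∀ i, x i = 1 ∨ x i = -1) →
      (∀ i, y i = 1 ∨ y i = -1) →
      (P {ω | X n ω = x ∧ Y n ω = y}).toReal
        = (P {ω | X n ω = x}).toReal * ∏ i, (if y i = x i then 1 - p else p))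
    (n : ℕ) (Q : (Fin n → ℝ) → (Fin n → ℝ) → Prop)
    (v : Bool × Bool → ℝ) (a : ℝ)
    (hQ : ∀ s : Fin n → Bool × Bool,
      Q (fun i => pmErr (s i).1) (fun i => pmErr (s i).2) → a * n ≤ ∑ i, v (s i)) :
    P {ω | Q (X n ω) (Y n ω)}
      ≤ ENNReal.ofReal ((Real.exp (-a) * ∑ x, Real.exp (v x) * wErr p h x) ^ n) := by
  classical
  exact (event_bound P p h X Y hXval hYval hXpmf hjoint n Q).trans
    (ENNReal.ofReal_le_ofReal (chernoffAux (wErr p h) v (wErr_nonneg h hp0 hp1) n a _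
      (fun s hs => hQ s (Finset.mem_filter.mp hs).2)))

lemma exists_decay
    (hp0 : 0 < p) (hp1 : p < 1 / 2)
    (hXval : ∀ n ω i, X n ω i = 1 ∨ X n ω i = -1)
    (hYval : ∀ n ω i, Y n ω i = 1 ∨ Y n ω i = -1)
    (hXpmf : ∀ n (x : Fin n → ℝ), (∀ i, x i = 1 ∨ x i = -1) →
      (P {ω | X n ω = x}).toReal
        = ∏ i, Real.exp (h * x i) / (Real.exp h + Real.exp (-h)))
    (hjoint : ∀ n (x y : Fin n → ℝ), (∀ i, x i = 1 ∨ x i = -1) →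
      (∀ i, y i = 1 ∨ y i = -1) →
      (P {ω | X n ω = x ∧ Y n ω = y}).toReal
        = (P {ω | X n ω = x}).toReal * ∏ i, (if y i = x i then 1 - p else p))
    (hSh : S ≠ Real.tanh h) :
    ∃ c : ℝ, 0 < c ∧ c < 1 ∧ ∀ n : ℕ,
      P {ω | ((∑ i, X n ω i) / n - S) * ((∑ i, Y n ω i) / n - (1 - 2 * p) * S) < 0}
        ≤ ENNReal.ofReal (2 * c ^ n) := by
  classical
  have hZ : 0 < Real.exp h + Real.exp (-h) := by positivity
  set q : ℝ := Real.exp h / (Real.exp h + Real.exp (-h)) with hqdef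
  have hq0 : 0 < q := by positivity
  have hq1 : q < 1 := by
    rw [hqdef, div_lt_one hZ]; linarith [Real.exp_pos (-h)]
  have h1q : Real.exp (-h) / (Real.exp h + Real.exp (-h)) = 1 - q := by
    rw [hqdef]; field_simp; ring
  have htanh : Real.tanh h = 2 * q - 1 := by
    rw [Real.tanh_eq_sinh_div_cosh, Real.sinh_eq, Real.cosh_eq, hqdef]
    field_simp
    ring
  set r : ℝ := q * (1 - p) + (1 - q) * p with hrdef
  have hp2 : (0:ℝ) < 1 - 2 * p := by linarith
  have hr : 2 * r - 1 = (1 - 2 * p) * (2 * q - 1) := by rw [hrdef]; ring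
  have hr0 : 0 < r := by nlinarith
  have hr1 : r < 1 := by nlinarith
  have hsX : ∀ τ : ℝ, ∑ x : Bool × Bool, Real.exp (τ * pmErr x.1) * wErr p h x
      = q * Real.exp τ + (1 - q) * Real.exp (-τ) := by
    intro τ; rw [sumX, h1q, ← hqdef]
  have hsY : ∀ τ : ℝ, ∑ x : Bool × Bool, Real.exp (τ * pmErr x.2) * wErr p h x
      = r * Real.exp τ + (1 - r) * Real.exp (-τ) := by
    intro τ; rw [sumY, h1q, ← hqdef, hrdef]; ring
  rcases lt_or_gt_of_ne hSh with hlt | hgt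
  · -- S < tanh h
    rw [htanh] at hlt
    obtain ⟨τ1, hτ1, hc1⟩ := existsTilt q S hlt
    obtain ⟨τ2, hτ2, hc2⟩ := existsTilt r ((1 - 2 * p) * S) (by nlinarith)
    set c1 : ℝ := Real.exp (τ1 * S) * (q * Real.exp (-τ1) + (1 - q) * Real.exp τ1) with hc1def
    set c2 : ℝ := Real.exp (τ2 * ((1 - 2 * p) * S))
        * (r * Real.exp (-τ2) + (1 - r) * Real.exp τ2) with hc2def
    have hc1pos : 0 < c1 := by
      have : 0 < q * Real.exp (-τ1) + (1 - q) * Real.exp τ1 := by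
        nlinarith [Real.exp_pos (-τ1), Real.exp_pos τ1]
      exact mul_pos (Real.exp_pos _) this
    have hc2pos : 0 < c2 := by
      have : 0 < r * Real.exp (-τ2) + (1 - r) * Real.exp τ2 := by
        nlinarith [Real.exp_pos (-τ2), Real.exp_pos τ2]
      exact mul_pos (Real.exp_pos _) this
    refine ⟨max c1 c2, lt_max_of_lt_left hc1pos, max_lt hc1 hc2, fun n => ?_⟩
    have hincl : {ω | ((∑ i, X n ω i) / n - S) * ((∑ i, Y n ω i) / n - (1 - 2 * p) * S) < 0}
        ⊆ {ω | (∑ i, X n ω i) ≤ S * n} ∪ {ω | (∑ i, Y n ω i) ≤ (1 - 2 * p) * S * n} := by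
      intro ω hω
      simp only [Set.mem_setOf_eq, Set.mem_union] at hω ⊢
      rcases Nat.eq_zero_or_pos n with hn | hn
      · exfalso; subst hn; simp at hω; nlinarith [sq_nonneg S]
      · have hn' : (0:ℝ) < n := by exact_mod_cast hn
        rcases mul_neg_iff.mp hω with ⟨h1, h2⟩ | ⟨h1, h2⟩
        · exact Or.inr (le_of_lt ((div_lt_iff₀ hn').mp (by linarith)))
        · exact Or.inl (le_of_lt ((div_lt_iff₀ hn').mp (by linarith)))
    have bX : P {ω | (∑ i, X n ω i) ≤ S * n} ≤ ENNReal.ofReal (c1 ^ n) := by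
      have := prob_bound P p h X Y hp0 hp1 hXval hYval hXpmf hjoint n
        (fun x _ => (∑ i, x i) ≤ S * n) (fun x => -τ1 * pmErr x.1) (-(τ1 * S))
        (fun s hs => by
          simp only [← Finset.mul_sum]
          nlinarith)
      refine this.trans (le_of_eq ?_)
      congr 1
      have : ∀ x : Bool × Bool, -τ1 * pmErr x.1 = (-τ1) * pmErr x.1 := fun _ => rfl
      rw [show (∑ x : Bool × Bool, Real.exp (-τ1 * pmErr x.1) * wErr p h x)
            = q * Real.exp (-τ1) + (1 - q) * Real.exp τ1 by rw [hsX (-τ1), neg_neg],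
          neg_neg]
    have bY : P {ω | (∑ i, Y n ω i) ≤ (1 - 2 * p) * S * n} ≤ ENNReal.ofReal (c2 ^ n) := by
      have := prob_bound P p h X Y hp0 hp1 hXval hYval hXpmf hjoint n
        (fun _ y => (∑ i, y i) ≤ (1 - 2 * p) * S * n) (fun x => -τ2 * pmErr x.2)
        (-(τ2 * ((1 - 2 * p) * S)))
        (fun s hs => by
          simp only [← Finset.mul_sum]
          nlinarith)
      refine this.trans (le_of_eq ?_)
      congr 1
      rw [show (∑ x : Bool × Bool, Real.exp (-τ2 * pmErr x.2) * wErr p h x)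
            = r * Real.exp (-τ2) + (1 - r) * Real.exp τ2 by rw [hsY (-τ2), neg_neg],
          neg_neg]
    calc P {ω | ((∑ i, X n ω i) / n - S) * ((∑ i, Y n ω i) / n - (1 - 2 * p) * S) < 0}
        ≤ P ({ω | (∑ i, X n ω i) ≤ S * n} ∪ {ω | (∑ i, Y n ω i) ≤ (1 - 2 * p) * S * n}) :=
          measure_mono hincl
      _ ≤ P {ω | (∑ i, X n ω i) ≤ S * n} + P {ω | (∑ i, Y n ω i) ≤ (1 - 2 * p) * S * n} :=
          measure_union_le _ _
      _ ≤ ENNReal.ofReal (c1 ^ n) + ENNReal.ofReal (c2 ^ n) := add_le_add bX bY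
      _ ≤ ENNReal.ofReal (2 * max c1 c2 ^ n) := by
          rw [← ENNReal.ofReal_add (by positivity) (by positivity)]
          apply ENNReal.ofReal_le_ofReal
          have h1 := pow_le_pow_left₀ hc1pos.le (le_max_left c1 c2) n
          have h2 := pow_le_pow_left₀ hc2pos.le (le_max_right c1 c2) n
          linarith
  · -- S > tanh h
    rw [htanh] at hgt
    obtain ⟨τ1, hτ1, hc1⟩ := existsTilt (1 - q) (-S) (by linarith)
    obtain ⟨τ2, hτ2, hc2⟩ := existsTilt (1 - r) (-((1 - 2 * p) * S)) (by nlinarith)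
    set c1 : ℝ := Real.exp (-(τ1 * S)) * (q * Real.exp τ1 + (1 - q) * Real.exp (-τ1))
      with hc1def
    set c2 : ℝ := Real.exp (-(τ2 * ((1 - 2 * p) * S)))
        * (r * Real.exp τ2 + (1 - r) * Real.exp (-τ2)) with hc2def
    have hc1' : c1 < 1 := by
      refine lt_of_eq_of_lt ?_ hc1
      rw [hc1def, show τ1 * -S = -(τ1 * S) by ring]
      ring
    have hc2' : c2 < 1 := by
      refine lt_of_eq_of_lt ?_ hc2
      rw [hc2def, show τ2 * -((1 - 2 * p) * S) = -(τ2 * ((1 - 2 * p) * S)) by ring]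
      ring
    have hc1pos : 0 < c1 := by
      have : 0 < q * Real.exp τ1 + (1 - q) * Real.exp (-τ1) := by
        nlinarith [Real.exp_pos (-τ1), Real.exp_pos τ1]
      exact mul_pos (Real.exp_pos _) this
    have hc2pos : 0 < c2 := by
      have : 0 < r * Real.exp τ2 + (1 - r) * Real.exp (-τ2) := by
        nlinarith [Real.exp_pos (-τ2), Real.exp_pos τ2]
      exact mul_pos (Real.exp_pos _) this
    refine ⟨max c1 c2, lt_max_of_lt_left hc1pos, max_lt hc1' hc2', fun n => ?_⟩
    have hincl : {ω | ((∑ i, X n ω i) / n - S) * ((∑ i, Y n ω i) / n - (1 - 2 * p) * S) < 0}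
        ⊆ {ω | S * n ≤ (∑ i, X n ω i)} ∪ {ω | (1 - 2 * p) * S * n ≤ (∑ i, Y n ω i)} := by
      intro ω hω
      simp only [Set.mem_setOf_eq, Set.mem_union] at hω ⊢
      rcases Nat.eq_zero_or_pos n with hn | hn
      · exfalso; subst hn; simp at hω; nlinarith [sq_nonneg S]
      · have hn' : (0:ℝ) < n := by exact_mod_cast hn
        rcases mul_neg_iff.mp hω with ⟨h1, h2⟩ | ⟨h1, h2⟩
        · exact Or.inl (le_of_lt ((lt_div_iff₀ hn').mp (by linarith)))
        · exact Or.inr (le_of_lt ((lt_div_iff₀ hn').mp (by linarith)))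
    have bX : P {ω | S * n ≤ (∑ i, X n ω i)} ≤ ENNReal.ofReal (c1 ^ n) := by
      have := prob_bound P p h X Y hp0 hp1 hXval hYval hXpmf hjoint n
        (fun x _ => S * n ≤ (∑ i, x i)) (fun x => τ1 * pmErr x.1) (τ1 * S)
        (fun s hs => by
          simp only [← Finset.mul_sum]
          nlinarith)
      refine this.trans (le_of_eq ?_)
      congr 1
      rw [hsX τ1]
    have bY : P {ω | (1 - 2 * p) * S * n ≤ (∑ i, Y n ω i)} ≤ ENNReal.ofReal (c2 ^ n) := by
      have := prob_bound P p h X Y hp0 hp1 hXval hYval hXpmf hjoint n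
        (fun _ y => (1 - 2 * p) * S * n ≤ (∑ i, y i)) (fun x => τ2 * pmErr x.2)
        (τ2 * ((1 - 2 * p) * S))
        (fun s hs => by
          simp only [← Finset.mul_sum]
          nlinarith)
      refine this.trans (le_of_eq ?_)
      congr 1
      rw [hsY τ2]
    calc P {ω | ((∑ i, X n ω i) / n - S) * ((∑ i, Y n ω i) / n - (1 - 2 * p) * S) < 0}
        ≤ P ({ω | S * n ≤ (∑ i, X n ω i)} ∪ {ω | (1 - 2 * p) * S * n ≤ (∑ i, Y n ω i)}) :=
          measure_mono hincl
      _ ≤ P {ω | S * n ≤ (∑ i, X n ω i)} + P {ω | (1 - 2 * p) * S * n ≤ (∑ i, Y n ω i)} :=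
          measure_union_le _ _
      _ ≤ ENNReal.ofReal (c1 ^ n) + ENNReal.ofReal (c2 ^ n) := add_le_add bX bY
      _ ≤ ENNReal.ofReal (2 * max c1 c2 ^ n) := by
          rw [← ENNReal.ofReal_add (by positivity) (by positivity)]
          apply ENNReal.ofReal_le_ofReal
          have h1 := pow_le_pow_left₀ hc1pos.le (le_max_left c1 c2) n
          have h2 := pow_le_pow_left₀ hc2pos.le (le_max_right c1 c2) n
          linarith

end helper


/-- Empty graph (i.i.d. sentiments) model with external influence `h`:
the sentiments `X n` are i.i.d. `{-1,1}`-valued with `P(X i = 1) = e^h/(e^h + e^{-h})`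
(expressed through the product pmf), and the measurements `Y n` are conditionally
independent given `X n` with crossover probability `p`. If the supermajority threshold
satisfies `S ≠ tanh h`, then the detection error probability decays exponentially:
`limsup_{n→∞} (1/n) log P_e^{(n)} < 0` (logarithms in the extended reals), and in
particular `lim_{n→∞} P_e^{(n)} = 0`. -/
theorem empty_graph_error_decay
    {Ω : Type*} [MeasurableSpace Ω] (P : Measure Ω) [IsProbabilityMeasure P]
    (p S h : ℝ) (hp0 : 0 < p) (hp1 : p < 1 / 2) (hS0 : -1 < S) (hS1 : S < 1)
    (X Y : (n : ℕ) → Ω → Fin n → ℝ)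
    (hXval : ∀ n ω i, X n ω i = 1 ∨ X n ω i = -1)
    (hYval : ∀ n ω i, Y n ω i = 1 ∨ Y n ω i = -1)
    (hXmeas : ∀ n, Measurable (X n))
    (hYmeas : ∀ n, Measurable (Y n))
    (hXpmf : ∀ n (x : Fin n → ℝ), (∀ i, x i = 1 ∨ x i = -1) →
      (P {ω | X n ω = x}).toReal
        = ∏ i, Real.exp (h * x i) / (Real.exp h + Real.exp (-h)))
    (hjoint : ∀ n (x y : Fin n → ℝ), (∀ i, x i = 1 ∨ x i = -1) →
      (∀ i, y i = 1 ∨ y i = -1) →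
      (P {ω | X n ω = x ∧ Y n ω = y}).toReal
        = (P {ω | X n ω = x}).toReal * ∏ i, (if y i = x i then 1 - p else p))
    (hSh : S ≠ Real.tanh h) :
    limsup (fun n : ℕ =>
        (((n : ℝ)⁻¹ : ℝ) : EReal) * ENNReal.log
          (P {ω | ((∑ i, X n ω i) / n - S) * ((∑ i, Y n ω i) / n - (1 - 2 * p) * S) < 0}))
      atTop < 0
    ∧ Tendsto (fun n : ℕ =>
        (P {ω | ((∑ i, X n ω i) / n - S) * ((∑ i, Y n ω i) / n - (1 - 2 * p) * S) < 0}).toReal)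
      atTop (nhds 0) := by
  obtain ⟨c, hc0, hc1, hb⟩ :=
    exists_decay P p S h X Y hp0 hp1 hXval hYval hXpmf hjoint hSh
  have hlogc : Real.log c < 0 := Real.log_neg hc0 hc1
  constructor
  · -- limsup part
    set L : ℝ := Real.log c / 2 with hLdef
    have hL : L < 0 := by rw [hLdef]; linarith
    obtain ⟨N, hN⟩ := exists_nat_ge (Real.log 2 / (-Real.log c / 2))
    have hev : ∀ᶠ n : ℕ in atTop,
        (((n : ℝ)⁻¹ : ℝ) : EReal) * ENNReal.log
          (P {ω | ((∑ i, X n ω i) / n - S) * ((∑ i, Y n ω i) / n - (1 - 2 * p) * S) < 0})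
          ≤ (L : EReal) := by
      filter_upwards [eventually_ge_atTop (max N 1)] with n hn
      have hn1 : 1 ≤ n := le_trans (le_max_right N 1) hn
      have hnN : (N : ℝ) ≤ n := by exact_mod_cast le_trans (le_max_left N 1) hn
      have hn' : (0:ℝ) < n := by positivity
      have harith : Real.log 2 + n * Real.log c ≤ n * L := by
        have h1 : Real.log 2 ≤ n * (-Real.log c / 2) := by
          rw [div_le_iff₀ (by linarith : (0:ℝ) < -Real.log c / 2)] at hN
          nlinarith
        rw [hLdef]; nlinarith
      set x : EReal := ENNReal.log
          (P {ω | ((∑ i, X n ω i) / n - S) * ((∑ i, Y n ω i) / n - (1 - 2 * p) * S) < 0})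
        with hxdef
      have hxle : x ≤ ((n * L : ℝ) : EReal) := by
        calc x ≤ ENNReal.log (ENNReal.ofReal (2 * c ^ n)) := ENNReal.log_monotone (hb n)
          _ = ((Real.log (2 * c ^ n) : ℝ) : EReal) :=
              ENNReal.log_ofReal_of_pos (by positivity)
          _ = ((Real.log 2 + n * Real.log c : ℝ) : EReal) := by
              rw [Real.log_mul two_ne_zero (pow_ne_zero _ hc0.ne'), Real.log_pow]
          _ ≤ ((n * L : ℝ) : EReal) := by exact_mod_cast harith
      have hipos : (0 : EReal) < (((n : ℝ)⁻¹ : ℝ) : EReal) := by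
        exact_mod_cast inv_pos.mpr hn'
      rcases eq_or_ne x ⊥ with hx | hx
      · rw [hx, EReal.mul_bot_of_pos hipos]
        exact bot_le
      · have hxtop : x ≠ ⊤ := ne_top_of_le_ne_top (EReal.coe_ne_top _) hxle
        lift x to ℝ using ⟨hxtop, hx⟩ with xr
        rw [← EReal.coe_mul]
        have hxr : xr ≤ n * L := by exact_mod_cast hxle
        have : (n:ℝ)⁻¹ * xr ≤ L := by
          rw [inv_mul_le_iff₀ hn']
          linarith [hxr, mul_comm (n:ℝ) L]
        exact_mod_cast this
    have hls := Filter.limsup_le_of_le (by isBoundedDefault) hev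
    refine lt_of_le_of_lt hls ?_
    exact_mod_cast hL
  · -- tendsto part
    have hle : ∀ n : ℕ,
        (P {ω | ((∑ i, X n ω i) / n - S) * ((∑ i, Y n ω i) / n - (1 - 2 * p) * S)
          < 0}).toReal ≤ 2 * c ^ n := fun n =>
      ENNReal.toReal_le_of_le_ofReal (by positivity) (hb n)
    have htend : Tendsto (fun n : ℕ => 2 * c ^ n) atTop (nhds 0) := by
      have := (tendsto_pow_atTop_nhds_zero_of_lt_one hc0.le hc1).const_mul 2
      simpa using this
    exact squeeze_zero (fun n => ENNReal.toReal_nonneg) hle htend
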